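/- Fix n ≥ 2. The number of antichains in the poset P_n of pairs { (i,j) : 1 ≤ i < j ≤ n } ordered by (i,j) ≤ (k,l) iff k ≤ i and j ≤ l (containment of intervals) equals the Catalan number C_n = (1/(n+1))·binom(2n, n). -/

import Mathlib

open scoped Classical

def SFun (n : ℕ) : Type :=
  {f : Fin n → Fin n // Monotone f ∧ ∀ i : Fin n, (i : ℕ) ≤ (f i : ℕ)}

noncomputable instance (n : ℕ) : Fintype (SFun n) := by
  unfold SFun; infer_instance

instance : Unique (SFun 0) where
  default := ⟨Fin.elim0, fun a => a.elim0, fun a => a.elim0⟩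
  uniq := by rintro ⟨f, -, -⟩; exact Subtype.ext (funext fun a => a.elim0)

section Decomp

variable {n : ℕ}

lemma sfun_exists_fixed (f : SFun (n + 1)) :
    ∃ i, ∃ h : i < n + 1, (f.1 ⟨i, h⟩ : ℕ) = i :=
  ⟨n, n.lt_succ_self,
    le_antisymm (Nat.lt_succ_iff.mp (f.1 _).isLt) (f.2.2 ⟨n, n.lt_succ_self⟩)⟩

/-- the least fixed point of a staircase function on `Fin (n+1)` -/
noncomputable def lfp (f : SFun (n + 1)) : ℕ :=
  Nat.find (sfun_exists_fixed f)

lemma lfp_lt (f : SFun (n + 1)) : lfp f < n + 1 := (Nat.find_spec (sfun_exists_fixed f)).1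

lemma lfp_le (f : SFun (n + 1)) : lfp f ≤ n := Nat.lt_succ_iff.mp (lfp_lt f)

lemma lfp_fixed (f : SFun (n + 1)) : (f.1 ⟨lfp f, lfp_lt f⟩ : ℕ) = lfp f := by
  have h := (Nat.find_spec (sfun_exists_fixed f)).2
  exact h

lemma lfp_min (f : SFun (n + 1)) {j : ℕ} (hj : j < lfp f) (h : j < n + 1) :
    (f.1 ⟨j, h⟩ : ℕ) ≠ j := by
  have := Nat.find_min (sfun_exists_fixed f) hj
  intro hc
  exact this ⟨h, hc⟩

lemma lfp_gt {j : ℕ} (f : SFun (n + 1)) (hj : j < lfp f) (h : j < n + 1) :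
    j + 1 ≤ (f.1 ⟨j, h⟩ : ℕ) := by
  have h1 := f.2.2 ⟨j, h⟩
  have h2 := lfp_min f hj h
  simp only [Fin.val_mk] at h1
  omega

lemma val_le_of_le (f : SFun (n + 1)) {j k : ℕ} (hj : j < n + 1) (hk : k < n + 1)
    (hjk : j ≤ k) : (f.1 ⟨j, hj⟩ : ℕ) ≤ (f.1 ⟨k, hk⟩ : ℕ) := f.2.1 hjk

/-- left part of the decomposition -/
noncomputable def leftPart (f : SFun (n + 1)) : SFun (lfp f) := by
  refine ⟨fun j => ⟨(f.1 ⟨j, by have := j.isLt; have := lfp_lt f; omega⟩ : ℕ) - 1, ?_⟩, ?_, ?_⟩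
  · have hj := j.isLt
    have h1 := lfp_gt f hj (by have := lfp_lt f; omega)
    have h2 := val_le_of_le f (j := (j : ℕ)) (k := lfp f)
      (by have := lfp_lt f; omega) (lfp_lt f) (le_of_lt hj)
    have h3 := lfp_fixed f
    omega
  · intro a b hab
    have h1 := val_le_of_le f (j := a) (k := b)
      (by have := a.isLt; have := lfp_lt f; omega)
      (by have := b.isLt; have := lfp_lt f; omega) hab
    simp only [Fin.mk_le_mk]
    omega
  · intro j
    have h1 := lfp_gt f j.isLt (by have := j.isLt; have := lfp_lt f; omega)
    simp only [Fin.val_mk]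
    omega

/-- right part of the decomposition -/
noncomputable def rightPart (f : SFun (n + 1)) : SFun (n - lfp f) := by
  refine ⟨fun k => ⟨(f.1 ⟨lfp f + 1 + k, by have := k.isLt; omega⟩ : ℕ) - (lfp f + 1), ?_⟩, ?_, ?_⟩
  · have hk := k.isLt
    have h1 := (f.1 ⟨lfp f + 1 + k, by omega⟩).isLt
    have h2 := f.2.2 ⟨lfp f + 1 + k, by omega⟩
    simp only [Fin.val_mk] at h2
    omega
  · intro a b hab
    have hab' : (a : ℕ) ≤ b := hab
    have h1 := val_le_of_le f (j := lfp f + 1 + a) (k := lfp f + 1 + b)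
      (by have := a.isLt; omega)
      (by have := b.isLt; omega) (by omega)
    simp only [Fin.mk_le_mk]
    omega
  · intro k
    have hk := k.isLt
    have h2 := f.2.2 ⟨lfp f + 1 + k, by omega⟩
    simp only [Fin.val_mk] at h2 ⊢
    omega

/-- decomposition of a staircase function at its least fixed point -/
noncomputable def toSigma (f : SFun (n + 1)) :
    Σ i : Fin (n + 1), SFun i × SFun (n - i) :=
  ⟨⟨lfp f, lfp_lt f⟩, leftPart f, rightPart f⟩

end Decomp

section Glue

variable {n : ℕ}

/-- glue two staircase functions into one with a fixed point at `m`: raw function -/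
noncomputable def glueFun (m : ℕ) (hm : m ≤ n) (g : SFun m) (h : SFun (n - m)) :
    Fin (n + 1) → Fin (n + 1) := fun j =>
  if hj : (j : ℕ) < m then
    ⟨(g.1 ⟨j, hj⟩ : ℕ) + 1, by have := (g.1 ⟨j, hj⟩).isLt; omega⟩
  else if hj2 : (j : ℕ) = m then j
  else ⟨(h.1 ⟨(j : ℕ) - (m + 1), by have := j.isLt; omega⟩ : ℕ) + (m + 1), by
    have := (h.1 ⟨(j : ℕ) - (m + 1), by have := j.isLt; omega⟩).isLt; omega⟩

variable {m : ℕ} (hm : m ≤ n) (g : SFun m) (h : SFun (n - m))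

lemma glueFun_val_lt (j : Fin (n + 1)) (hj : (j : ℕ) < m) :
    ((glueFun m hm g h) j : ℕ) = (g.1 ⟨j, hj⟩ : ℕ) + 1 := by
  unfold glueFun
  rw [dif_pos hj]

lemma glueFun_val_eq (j : Fin (n + 1)) (hj : (j : ℕ) = m) :
    ((glueFun m hm g h) j : ℕ) = m := by
  unfold glueFun
  rw [dif_neg (by omega), dif_pos hj]
  exact hj

lemma glueFun_val_gt (j : Fin (n + 1)) (hj : m < (j : ℕ)) :
    ((glueFun m hm g h) j : ℕ) =
      (h.1 ⟨(j : ℕ) - (m + 1), by have := j.isLt; omega⟩ : ℕ) + (m + 1) := by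
  unfold glueFun
  rw [dif_neg (by omega), dif_neg (by omega)]

lemma glueFun_lt_trichotomy (j : Fin (n + 1)) :
    (j : ℕ) < m ∨ (j : ℕ) = m ∨ m < (j : ℕ) := Nat.lt_trichotomy _ _

lemma glueFun_le_m (j : Fin (n + 1)) (hj : (j : ℕ) ≤ m) :
    ((glueFun m hm g h) j : ℕ) ≤ m := by
  rcases Nat.lt_or_ge (j : ℕ) m with hc | hc
  · rw [glueFun_val_lt hm g h j hc]
    have := (g.1 ⟨j, hc⟩).isLt
    omega
  · rw [glueFun_val_eq hm g h j (by omega)]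

lemma glueFun_ge (j : Fin (n + 1)) : (j : ℕ) ≤ ((glueFun m hm g h) j : ℕ) := by
  rcases glueFun_lt_trichotomy (m := m) j with hc | hc | hc
  · rw [glueFun_val_lt hm g h j hc]
    have := g.2.2 ⟨j, hc⟩
    simp only [Fin.val_mk] at this
    omega
  · rw [glueFun_val_eq hm g h j hc]; omega
  · rw [glueFun_val_gt hm g h j hc]
    have := h.2.2 ⟨(j : ℕ) - (m + 1), by have := j.isLt; omega⟩
    simp only [Fin.val_mk] at this
    omega

lemma glueFun_mono : Monotone (glueFun m hm g h) := by
  intro a b hab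
  have hab' : (a : ℕ) ≤ (b : ℕ) := hab
  rw [Fin.le_def]
  rcases glueFun_lt_trichotomy (m := m) a with ha | ha | ha
  · rw [glueFun_val_lt hm g h a ha]
    rcases Nat.lt_or_ge (b : ℕ) m with hb | hb
    · rw [glueFun_val_lt hm g h b hb]
      have := g.2.1 (show (⟨a, ha⟩ : Fin m) ≤ ⟨b, hb⟩ by simp only [Fin.mk_le_mk]; omega)
      rw [Fin.le_def] at this
      omega
    · have h1 := (g.1 ⟨a, ha⟩).isLt
      have h2 := glueFun_ge hm g h b
      omega
  · have h2 := glueFun_ge hm g h b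
    rw [glueFun_val_eq hm g h a ha]
    omega
  · rw [glueFun_val_gt hm g h a ha, glueFun_val_gt hm g h b (by omega)]
    have := h.2.1 (show (⟨(a : ℕ) - (m + 1), by have := a.isLt; omega⟩ : Fin (n - m)) ≤
        ⟨(b : ℕ) - (m + 1), by have := b.isLt; omega⟩ by simp only [Fin.mk_le_mk]; omega)
    rw [Fin.le_def] at this
    omega

/-- glue two staircase functions into one with a fixed point at `m` -/
noncomputable def glue : SFun (n + 1) :=
  ⟨glueFun m hm g h, glueFun_mono hm g h, glueFun_ge hm g h⟩

end Glue

section RoundTrip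

variable {n : ℕ}

lemma sfun_congr {N : ℕ} (f : SFun N) {a b : Fin N} (hab : (a : ℕ) = (b : ℕ)) :
    (f.1 a : ℕ) = (f.1 b : ℕ) := by rw [Fin.ext hab]

lemma leftPart_val (f : SFun (n + 1)) (j : Fin (lfp f)) :
    ((leftPart f).1 j : ℕ) =
      (f.1 ⟨j, by have := j.isLt; have := lfp_lt f; omega⟩ : ℕ) - 1 := rfl

lemma rightPart_val (f : SFun (n + 1)) (k : Fin (n - lfp f)) :
    ((rightPart f).1 k : ℕ) =
      (f.1 ⟨lfp f + 1 + k, by have := k.isLt; omega⟩ : ℕ) - (lfp f + 1) := rfl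

lemma glue_toSigma (f : SFun (n + 1)) :
    glue (lfp_le f) (leftPart f) (rightPart f) = f := by
  apply Subtype.ext
  funext j
  apply Fin.ext
  rcases Nat.lt_trichotomy (j : ℕ) (lfp f) with hj | hj | hj
  · rw [show ((glue (lfp_le f) (leftPart f) (rightPart f)).1 j : ℕ) =
      ((leftPart f).1 ⟨j, hj⟩ : ℕ) + 1 from
      glueFun_val_lt (lfp_le f) (leftPart f) (rightPart f) j hj]
    rw [leftPart_val]
    have h1 := lfp_gt f hj j.isLt
    simp only [Fin.val_mk, Fin.eta] at h1 ⊢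
    omega
  · rw [show ((glue (lfp_le f) (leftPart f) (rightPart f)).1 j : ℕ) = lfp f from
      glueFun_val_eq (lfp_le f) (leftPart f) (rightPart f) j hj]
    have h2 := lfp_fixed f
    have h3 : (⟨lfp f, lfp_lt f⟩ : Fin (n + 1)) = j := Fin.ext (by simp [← hj])
    rw [h3] at h2
    omega
  · rw [show ((glue (lfp_le f) (leftPart f) (rightPart f)).1 j : ℕ) =
      ((rightPart f).1 ⟨(j : ℕ) - (lfp f + 1), by have := j.isLt; omega⟩ : ℕ) + (lfp f + 1)
      from glueFun_val_gt (lfp_le f) (leftPart f) (rightPart f) j hj]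
    rw [rightPart_val]
    have h3 := f.2.2 j
    have h4 : (⟨lfp f + 1 + ((⟨(j : ℕ) - (lfp f + 1), by have := j.isLt; omega⟩ : Fin (n - lfp f)) : ℕ),
        by have := j.isLt; simp only [Fin.val_mk]; omega⟩ : Fin (n + 1)) = j :=
      Fin.ext (by simp only [Fin.val_mk]; omega)
    rw [h4]
    omega

lemma lfp_eq (f : SFun (n + 1)) (k : ℕ) (hk : k < n + 1)
    (hfix : (f.1 ⟨k, hk⟩ : ℕ) = k)
    (hmin : ∀ j (hj : j < n + 1), j < k → (f.1 ⟨j, hj⟩ : ℕ) ≠ j) : lfp f = k := by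
  have h1 : lfp f ≤ k := Nat.find_le ⟨hk, hfix⟩
  rcases Nat.lt_or_ge (lfp f) k with h2 | h2
  · exact absurd (lfp_fixed f) (hmin _ (lfp_lt f) h2)
  · omega

lemma lfp_glue {m : ℕ} (hm : m ≤ n) (g : SFun m) (h : SFun (n - m)) :
    lfp (glue hm g h) = m := by
  apply lfp_eq
  · exact glueFun_val_eq hm g h ⟨m, by omega⟩ rfl
  · intro j hj hjm
    rw [show ((glue hm g h).1 ⟨j, hj⟩ : ℕ) = (g.1 ⟨j, hjm⟩ : ℕ) + 1 from
      glueFun_val_lt hm g h ⟨j, hj⟩ hjm]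
    have := g.2.2 ⟨j, hjm⟩
    simp only [Fin.val_mk] at this
    omega

end RoundTrip

section Count

variable {n : ℕ}

noncomputable def fromSigma (x : Σ i : Fin (n + 1), SFun i × SFun (n - i)) :
    SFun (n + 1) :=
  glue (Nat.lt_succ_iff.mp x.1.isLt) x.2.1 x.2.2

lemma toSigma_injective : Function.Injective (toSigma (n := n)) := by
  have : Function.LeftInverse fromSigma (toSigma (n := n)) := by
    intro f
    exact glue_toSigma f
  exact this.injective

lemma glue_val_lt {m : ℕ} (hm : m ≤ n) (g : SFun m) (h : SFun (n - m))
    (j : Fin (n + 1)) (hj : (j : ℕ) < m) :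
    ((glue hm g h).1 j : ℕ) = (g.1 ⟨j, hj⟩ : ℕ) + 1 :=
  glueFun_val_lt hm g h j hj

lemma glue_val_gt {m : ℕ} (hm : m ≤ n) (g : SFun m) (h : SFun (n - m))
    (j : Fin (n + 1)) (hj : m < (j : ℕ)) :
    ((glue hm g h).1 j : ℕ) =
      (h.1 ⟨(j : ℕ) - (m + 1), by have := j.isLt; omega⟩ : ℕ) + (m + 1) :=
  glueFun_val_gt hm g h j hj

lemma fromSigma_injective : Function.Injective (fromSigma (n := n)) := by
  rintro ⟨i, g, h⟩ ⟨i', g', h'⟩ heq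
  unfold fromSigma at heq
  dsimp only at heq
  have hm : (i : ℕ) ≤ n := Nat.lt_succ_iff.mp i.isLt
  have hm' : (i' : ℕ) ≤ n := Nat.lt_succ_iff.mp i'.isLt
  have e1 := lfp_glue hm g h
  have e2 := lfp_glue hm' g' h'
  have hii : i = i' := by
    apply Fin.ext
    rw [← e1, ← e2]
    exact congrArg lfp heq
  subst hii
  have hval : ∀ j : Fin (n + 1),
      ((glue hm g h).1 j : ℕ) = ((glue hm' g' h').1 j : ℕ) := fun j => by rw [heq]
  have hg : g = g' := by
    apply Subtype.ext
    funext j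
    apply Fin.ext
    have hjlt : (j : ℕ) < n + 1 := by have := j.isLt; omega
    have hj : ((⟨(j : ℕ), hjlt⟩ : Fin (n + 1)) : ℕ) < (i : ℕ) := j.isLt
    have hv := hval ⟨(j : ℕ), hjlt⟩
    rw [glue_val_lt hm g h _ hj, glue_val_lt hm' g' h' _ hj] at hv
    have e : (⟨((⟨(j : ℕ), hjlt⟩ : Fin (n + 1)) : ℕ), hj⟩ : Fin i) = j := Fin.ext rfl
    rw [e] at hv
    omega
  have hh : h = h' := by
    apply Subtype.ext
    funext k
    apply Fin.ext
    have hklt : (i : ℕ) + 1 + (k : ℕ) < n + 1 := by have := k.isLt; omega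
    have hk : (i : ℕ) < ((⟨(i : ℕ) + 1 + (k : ℕ), hklt⟩ : Fin (n + 1)) : ℕ) := by
      simp only [Fin.val_mk]; omega
    have hv := hval ⟨(i : ℕ) + 1 + (k : ℕ), hklt⟩
    rw [glue_val_gt hm g h _ hk, glue_val_gt hm' g' h' _ hk] at hv
    have e : (⟨((⟨(i : ℕ) + 1 + (k : ℕ), hklt⟩ : Fin (n + 1)) : ℕ) - ((i : ℕ) + 1),
        by have := k.isLt; simp only [Fin.val_mk]; omega⟩ : Fin (n - i)) = k :=
      Fin.ext (by simp only [Fin.val_mk]; omega)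
    rw [e] at hv
    omega
  rw [hg, hh]

lemma card_sfun : ∀ n, Fintype.card (SFun n) = catalan n := by
  intro n
  induction n using Nat.strong_induction_on with
  | _ n ih =>
    match n with
    | 0 => rw [Fintype.card_unique, catalan_zero]
    | (k + 1) =>
      have h1 : Fintype.card (SFun (k + 1)) =
          Fintype.card (Σ i : Fin (k + 1), SFun i × SFun (k - i)) :=
        le_antisymm (Fintype.card_le_of_injective _ toSigma_injective)
          (Fintype.card_le_of_injective _ fromSigma_injective)
      rw [h1, Fintype.card_sigma, catalan_succ]
      apply Finset.sum_congr rfl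
      intro i _
      rw [Fintype.card_prod, ih i (by have := i.isLt; omega), ih (k - i) (by omega)]

end Count

section Antichain

variable {n : ℕ}

/-- the root poset -/
abbrev RP (n : ℕ) := {p : Fin n × Fin n // p.1 < p.2}

/-- the order relation -/
abbrev rpLE (a b : RP n) : Prop := b.1.1 ≤ a.1.1 ∧ a.1.2 ≤ b.1.2

/-- the set used to define the staircase function of an antichain -/
noncomputable def acSet (A : Finset (RP n)) (i : Fin n) : Finset (Fin n) :=
  insert i ((A.filter (fun p => p.1.1 ≤ i)).image (fun p => p.1.2))

lemma acSet_nonempty (A : Finset (RP n)) (i : Fin n) : (acSet A i).Nonempty :=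
  ⟨i, Finset.mem_insert_self _ _⟩

/-- the staircase function of an antichain -/
noncomputable def acFun (A : Finset (RP n)) (i : Fin n) : Fin n :=
  (acSet A i).max' (acSet_nonempty A i)

lemma le_acFun (A : Finset (RP n)) (i : Fin n) : i ≤ acFun A i :=
  Finset.le_max' _ _ (Finset.mem_insert_self _ _)

lemma snd_le_acFun (A : Finset (RP n)) {p : RP n} (hp : p ∈ A) {i : Fin n}
    (hi : p.1.1 ≤ i) : p.1.2 ≤ acFun A i := by
  apply Finset.le_max'
  apply Finset.mem_insert_of_mem
  exact Finset.mem_image.mpr ⟨p, Finset.mem_filter.mpr ⟨hp, hi⟩, rfl⟩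

lemma acFun_cases (A : Finset (RP n)) (i : Fin n) :
    acFun A i = i ∨ ∃ p ∈ A, p.1.1 ≤ i ∧ p.1.2 = acFun A i := by
  have h := Finset.max'_mem _ (acSet_nonempty A i)
  unfold acSet at h
  rw [Finset.mem_insert] at h
  rcases h with h | h
  · exact Or.inl h
  · rw [Finset.mem_image] at h
    obtain ⟨p, hp, hp2⟩ := h
    rw [Finset.mem_filter] at hp
    exact Or.inr ⟨p, hp.1, hp.2, hp2⟩

lemma acFun_mono (A : Finset (RP n)) : Monotone (acFun A) := by
  intro i j hij
  apply Finset.max'_le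
  intro x hx
  unfold acSet at hx
  rw [Finset.mem_insert] at hx
  rcases hx with hx | hx
  · subst hx
    exact le_trans hij (le_acFun A j)
  · rw [Finset.mem_image] at hx
    obtain ⟨p, hp, hp2⟩ := hx
    rw [Finset.mem_filter] at hp
    subst hp2
    exact snd_le_acFun A hp.1 (le_trans hp.2 hij)

/-- the staircase function of an antichain, as an element of `SFun n` -/
noncomputable def acToSFun (A : Finset (RP n)) : SFun n :=
  ⟨acFun A, acFun_mono A, fun i => le_acFun A i⟩

/-- the antichain associated to a staircase function -/
noncomputable def sfunToAC (f : SFun n) : Finset (RP n) :=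
  Finset.univ.filter (fun p =>
    p.1.2 = f.1 p.1.1 ∧ ∀ k : Fin n, k < p.1.1 → f.1 k < f.1 p.1.1)

lemma mem_sfunToAC {f : SFun n} {p : RP n} :
    p ∈ sfunToAC f ↔
      p.1.2 = f.1 p.1.1 ∧ ∀ k : Fin n, k < p.1.1 → f.1 k < f.1 p.1.1 := by
  rw [sfunToAC, Finset.mem_filter]
  simp

lemma sfunToAC_isAntichain (f : SFun n) :
    IsAntichain (fun a b : RP n => rpLE a b) (sfunToAC f : Set (RP n)) := by
  intro p hp q hq hpq hr
  rw [Finset.mem_coe, mem_sfunToAC] at hp hq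
  obtain ⟨hr1, hr2⟩ := hr
  have h1 : f.1 q.1.1 ≤ f.1 p.1.1 := f.2.1 hr1
  have h2 : f.1 p.1.1 ≤ f.1 q.1.1 := by rw [← hp.1, ← hq.1]; exact hr2
  have h3 : ¬ (q.1.1 < p.1.1) := by
    intro hc
    exact absurd (le_antisymm h2 h1) (ne_of_gt (hp.2 q.1.1 hc))
  have h4 : q.1.1 = p.1.1 := le_antisymm hr1 (not_lt.mp h3)
  apply hpq
  apply Subtype.ext
  apply Prod.ext
  · exact h4.symm
  · rw [hp.1, hq.1, h4]

lemma sfunToAC_acToSFun (A : Finset (RP n))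
    (hA : IsAntichain (fun a b : RP n => rpLE a b) (A : Set (RP n))) :
    sfunToAC (acToSFun A) = A := by
  ext p
  rw [mem_sfunToAC]
  simp only [show (acToSFun A).1 = acFun A from rfl]
  constructor
  · rintro ⟨h1, h2⟩
    rcases acFun_cases A p.1.1 with hc | ⟨q, hq, hq1, hq2⟩
    · exfalso
      rw [hc] at h1
      exact absurd h1 (ne_of_gt p.2)
    · rcases eq_or_lt_of_le hq1 with he | hlt
      · have : q = p := by
          apply Subtype.ext
          apply Prod.ext
          · exact he
          · rw [hq2]; exact h1.symm
        rwa [← this]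
      · exfalso
        have h3 := h2 q.1.1 hlt
        have h4 : p.1.2 ≤ acFun A q.1.1 := by
          rw [h1, ← hq2]
          exact snd_le_acFun A hq le_rfl
        rw [h1] at h4
        exact absurd h4 (not_le.mpr h3)
  · intro hp
    have ha : p.1.2 = acFun A p.1.1 := by
      have hle : p.1.2 ≤ acFun A p.1.1 := snd_le_acFun A hp le_rfl
      rcases acFun_cases A p.1.1 with hc | ⟨q, hq, hq1, hq2⟩
      · exfalso
        rw [hc] at hle
        exact absurd hle (not_le.mpr p.2)
      · by_cases hqp : q = p
        · rw [← hq2, hqp]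
        · exfalso
          exact hA (Finset.mem_coe.mpr hp) (Finset.mem_coe.mpr hq)
            (fun e => hqp e.symm) ⟨hq1, hq2 ▸ hle⟩
    refine ⟨ha, ?_⟩
    intro k hk
    by_contra hc
    push_neg at hc
    have hke : acFun A k = acFun A p.1.1 :=
      le_antisymm (acFun_mono A (le_of_lt hk)) hc
    rcases acFun_cases A k with hc2 | ⟨q, hq, hq1, hq2⟩
    · rw [hc2] at hke
      have : (k : ℕ) < (p.1.2 : ℕ) := by
        have := p.2
        have hkp : (k : ℕ) < (p.1.1 : ℕ) := hk
        have := p.2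
        omega
      rw [← ha] at hke
      have : (k : ℕ) = (p.1.2 : ℕ) := congrArg Fin.val hke
      omega
    · have hqne : q ≠ p := by
        intro he
        rw [he] at hq1
        exact absurd (lt_of_le_of_lt hq1 hk) (lt_irrefl _)
      apply hA (Finset.mem_coe.mpr hp) (Finset.mem_coe.mpr hq) (fun e => hqne e.symm)
      constructor
      · exact le_trans hq1 (le_of_lt hk)
      · rw [hq2, hke, ← ha]

end Antichain

section Final

variable {n : ℕ}

lemma acToSFun_sfunToAC (f : SFun n) : acToSFun (sfunToAC f) = f := by
  apply Subtype.ext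
  funext i
  have hval : (acToSFun (sfunToAC f)).1 = acFun (sfunToAC f) := rfl
  rw [hval]
  apply le_antisymm
  · apply Finset.max'_le
    intro x hx
    unfold acSet at hx
    rw [Finset.mem_insert] at hx
    rcases hx with hx | hx
    · rw [hx, Fin.le_def]
      exact f.2.2 i
    · rw [Finset.mem_image] at hx
      obtain ⟨p, hp, hp2⟩ := hx
      rw [Finset.mem_filter] at hp
      obtain ⟨hpm, hpi⟩ := hp
      rw [mem_sfunToAC] at hpm
      subst hp2
      rw [hpm.1]
      exact f.2.1 hpi
  · by_cases h0 : f.1 i = i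
    · rw [h0]
      exact le_acFun _ i
    · have hex : ∃ a, ∃ h : a < n, f.1 ⟨a, h⟩ = f.1 i :=
        ⟨(i : ℕ), i.isLt, by rw [Fin.eta]⟩
      set a := Nat.find hex with hadef
      obtain ⟨ha, hfa⟩ := Nat.find_spec hex
      have hai : a ≤ (i : ℕ) := Nat.find_le ⟨i.isLt, by rw [Fin.eta]⟩
      have hfi : (i : ℕ) < (f.1 i : ℕ) := by
        have h1 := f.2.2 i
        have h2 : (f.1 i : ℕ) ≠ (i : ℕ) := fun hc => h0 (Fin.ext hc)
        omega
      have hlt : (⟨a, ha⟩ : Fin n) < f.1 ⟨a, ha⟩ := by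
        rw [Fin.lt_def, hfa]
        simp only [Fin.val_mk]
        omega
      set p : RP n := ⟨(⟨a, ha⟩, f.1 ⟨a, ha⟩), hlt⟩ with hpdef
      have hpmem : p ∈ sfunToAC f := by
        rw [mem_sfunToAC]
        constructor
        · rfl
        · intro k hk
          have h1 : f.1 k ≤ f.1 ⟨a, ha⟩ := f.2.1 (le_of_lt hk)
          rcases eq_or_lt_of_le h1 with he | hl
          · exfalso
            have hkv : (k : ℕ) < a := by exact Fin.lt_def.mp hk
            have hkm : ¬ ∃ h : (k : ℕ) < n, f.1 ⟨(k : ℕ), h⟩ = f.1 i :=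
              Nat.find_min hex hkv
            apply hkm
            refine ⟨k.isLt, ?_⟩
            rw [Fin.eta, he, hfa]
          · exact hl
      have h5 : p.1.1 ≤ i := by
        rw [Fin.le_def]
        exact hai
      have h6 := snd_le_acFun (sfunToAC f) hpmem h5
      have h7 : p.1.2 = f.1 i := hfa
      rwa [h7] at h6

/-- the equivalence between antichains and staircase functions -/
noncomputable def acEquiv (n : ℕ) :
    {A : Finset (RP n) // IsAntichain (fun a b : RP n => rpLE a b) (A : Set (RP n))} ≃
      SFun n where
  toFun A := acToSFun A.1
  invFun f := ⟨sfunToAC f, sfunToAC_isAntichain f⟩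
  left_inv A := Subtype.ext (sfunToAC_acToSFun A.1 A.2)
  right_inv f := acToSFun_sfunToAC f

end Final

open scoped Classical in
/-- the number of antichains in the type `A_{n-1}` root poset
`P_n = {(i,j) : i < j}` with `(i,j) ≤ (k,l)` iff `k ≤ i` and `j ≤ l`
equals the Catalan number `C_n = (1/(n+1)) * binom(2n, n)`. -/
theorem stmt_8 (n : ℕ) (hn : 2 ≤ n) :
    Fintype.card {A : Finset {p : Fin n × Fin n // p.1 < p.2} //
      IsAntichain
        (fun a b : {p : Fin n × Fin n // p.1 < p.2} =>
          b.1.1 ≤ a.1.1 ∧ a.1.2 ≤ b.1.2)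
        (A : Set {p : Fin n × Fin n // p.1 < p.2})} =
    Nat.choose (2 * n) n / (n + 1) := by
  have h1 : Fintype.card {A : Finset (RP n) //
      IsAntichain (fun a b : RP n => rpLE a b) (A : Set (RP n))} = Fintype.card (SFun n) :=
    Fintype.card_congr (acEquiv n)
  rw [h1, card_sfun, catalan_eq_centralBinom_div, Nat.centralBinom]
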